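/- arXiv:2104.13529 — 2 statements merged into one kernel-verified Lean document; each statement's English description precedes it below -/
import Mathlib

section
/- Let U be a unitary on H satisfying the SSQW conditions, and let {η₁ˣ, η₂ˣ}_{x∈ℤ} be orthonormal bases of the H_x with U H_x ⊆ ℂη₁^{x−1} ⊕ H_x ⊕ ℂη₂^{x+1} for all x ∈ ℤ. If rank(P_x U P_{x+1}) = 0 for some x ∈ ℤ, then there exists a unit vector ζ₁ ∈ H_x such that U ζ₁ = η₁ˣ. Similarly, if rank(P_x U P_{x−1}) = 0 for some x ∈ ℤ, then there exists a unit vector ζ₂ ∈ H_x such that U ζ₂ = η₂ˣ. -/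
noncomputable section

/-- `H = ⊕_{x∈ℤ} H_x`, the ℓ² direct sum with each `H_x` a copy of `ℂ²`. -/
abbrev H : Type := lp (fun _ : ℤ × Fin 2 => ℂ) 2

/-- The canonical orthonormal basis vector `eᵢˣ` of `H_x` viewed in `H`. -/
def e (x : ℤ) (i : Fin 2) : H := lp.single 2 (x, i) 1

/-- The subspace `H_x` of `H`. -/
def Hx (x : ℤ) : Submodule ℂ H := Submodule.span ℂ {e x 0, e x 1}

/-- The rank-one operator `|u⟩⟨v| : w ↦ ⟨v, w⟩ u`. -/
def ketbra (u v : H) : H →L[ℂ] H := ((innerSL ℂ) v).smulRight u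

/-- The orthogonal projection of `H` onto `H_x`. -/
def P (x : ℤ) : H →L[ℂ] H := ketbra (e x 0) (e x 0) + ketbra (e x 1) (e x 1)

/-- A unitary (linear isometric equivalence) viewed as a continuous linear map. -/
def clm (U : H ≃ₗᵢ[ℂ] H) : H →L[ℂ] H := U.toLinearIsometry.toContinuousLinearMap

/-- `{u, v}` is an orthonormal basis of the two dimensional space `H_x`. -/
def ONBx (x : ℤ) (u v : H) : Prop :=
  u ∈ Hx x ∧ v ∈ Hx x ∧ ‖u‖ = 1 ∧ ‖v‖ = 1 ∧ (inner ℂ u v : ℂ) = 0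

/-- The SSQW conditions: `U H_x ⊆ H_{x-1} ⊕ H_x ⊕ H_{x+1}` and
`rank(P_{x±1} U P_x) ≤ 1` for all `x`. -/
def SSQW (U : H ≃ₗᵢ[ℂ] H) : Prop :=
  (∀ x : ℤ, ∀ ψ ∈ Hx x, U ψ ∈ Hx (x - 1) ⊔ Hx x ⊔ Hx (x + 1)) ∧
  (∀ x : ℤ, LinearMap.rank (((P (x + 1)).comp ((clm U).comp (P x))).toLinearMap) ≤ 1) ∧
  (∀ x : ℤ, LinearMap.rank (((P (x - 1)).comp ((clm U).comp (P x))).toLinearMap) ≤ 1)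

lemma e_mem (x : ℤ) (i : Fin 2) : e x i ∈ Hx x := by
  fin_cases i <;> exact Submodule.subset_span (by simp)

lemma inner_e_ne {x y : ℤ} (h : x ≠ y) (i j : Fin 2) : (inner ℂ (e x i) (e y j) : ℂ) = 0 := by
  rw [e, e, lp.inner_single_left, lp.single_apply]
  rw [Pi.single_apply, if_neg (fun hc => h (congrArg Prod.fst hc))]
  simp

lemma inner_e_e (x : ℤ) (i j : Fin 2) :
    (inner ℂ (e x i) (e x j) : ℂ) = if i = j then 1 else 0 := by
  rw [e, e, lp.inner_single_left, lp.single_apply]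
  by_cases h : i = j
  · subst h; rw [Pi.single_eq_same]; simp
  · rw [Pi.single_apply, if_neg (by simp [Prod.ext_iff, h])]; simp [h]

lemma Hx_orth {x y : ℤ} (h : x ≠ y) {u v : H} (hu : u ∈ Hx x) (hv : v ∈ Hx y) :
    (inner ℂ u v : ℂ) = 0 := by
  obtain ⟨a, b, rfl⟩ := Submodule.mem_span_pair.mp hu
  obtain ⟨c, d, rfl⟩ := Submodule.mem_span_pair.mp hv
  simp [inner_add_left, inner_add_right, inner_smul_left, inner_smul_right, inner_e_ne h]

lemma inner_e_coord (x : ℤ) (i : Fin 2) (f : H) : (inner ℂ (e x i) f : ℂ) = f (x, i) := by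
  rw [e, lp.inner_single_left]; simp

lemma mem_Hx_of_coords {ζ : H} {x : ℤ}
    (h : ∀ y : ℤ, y ≠ x → ∀ i : Fin 2, (inner ℂ (e y i) ζ : ℂ) = 0) : ζ ∈ Hx x := by
  have hζ : ζ = ζ (x, 0) • e x 0 + ζ (x, 1) • e x 1 := by
    apply lp.ext
    funext k
    obtain ⟨y, i⟩ := k
    have hadd : ((ζ (x, 0) • e x 0 + ζ (x, 1) • e x 1 : H) : ∀ k : ℤ × Fin 2, ℂ) (y, i)
        = ζ (x, 0) * (e x 0 : ∀ k : ℤ × Fin 2, ℂ) (y, i)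
          + ζ (x, 1) * (e x 1 : ∀ k : ℤ × Fin 2, ℂ) (y, i) := by simp; rfl
    rw [hadd]
    by_cases hy : y = x
    · subst hy
      fin_cases i <;> simp [e, lp.single_apply]
    · rw [← inner_e_coord, h y hy i]
      simp [e, lp.single_apply, fun j : Fin 2 => show ((y, i) : ℤ × Fin 2) ≠ (x, j) by simp [hy]]
  rw [hζ]
  exact Submodule.add_mem _ (Submodule.smul_mem _ _ (e_mem x 0))
    (Submodule.smul_mem _ _ (e_mem x 1))

lemma rank_zero_inner {U : H ≃ₗᵢ[ℂ] H} {x z : ℤ}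
    (h : LinearMap.rank (((P x).comp ((clm U).comp (P z))).toLinearMap) = 0)
    (i j : Fin 2) : (inner ℂ (e x j) (U (e z i)) : ℂ) = 0 := by
  have h0 : ((P x).comp ((clm U).comp (P z))).toLinearMap = 0 :=
    LinearMap.range_eq_bot.mp (Submodule.rank_eq_zero.mp h)
  have hz : P z (e z i) = e z i := by
    show ((inner ℂ (e z 0) (e z i) : ℂ)) • e z 0 + ((inner ℂ (e z 1) (e z i) : ℂ)) • e z 1 = e z i
    fin_cases i <;> simp [-inner_self_eq_norm_sq_to_K, inner_e_e]
  have hPx : P x (U (e z i)) = 0 := by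
    have := congrArg (fun f => f (e z i)) h0
    simpa [ContinuousLinearMap.comp_apply, hz, clm] using this
  have hw : ∀ w : H, (inner ℂ (e x j) (P x w) : ℂ) = (inner ℂ (e x j) w : ℂ) := by
    intro w
    show (inner ℂ (e x j) (((inner ℂ (e x 0) w : ℂ)) • e x 0 + ((inner ℂ (e x 1) w : ℂ)) • e x 1) : ℂ)
      = _
    fin_cases j <;> simp [-inner_self_eq_norm_sq_to_K, inner_add_right, inner_smul_right, inner_e_e]
  rw [← hw, hPx, inner_zero_right]

lemma decomp_inner {U : H ≃ₗᵢ[ℂ] H} {η₁ η₂ : ℤ → H}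
    (hrange : ∀ x : ℤ, ∀ ψ ∈ Hx x,
      U ψ ∈ Submodule.span ℂ {η₁ (x - 1)} ⊔ Hx x ⊔ Submodule.span ℂ {η₂ (x + 1)})
    (y : ℤ) (i : Fin 2) (η : H)
    (ha : (inner ℂ (η₁ (y - 1)) η : ℂ) = 0)
    (hb : ∀ v ∈ Hx y, (inner ℂ v η : ℂ) = 0)
    (hc : (inner ℂ (η₂ (y + 1)) η : ℂ) = 0) :
    (inner ℂ (U (e y i)) η : ℂ) = 0 := by
  have hm := hrange y (e y i) (e_mem y i)
  obtain ⟨ab, hab, c, hc', heq⟩ := Submodule.mem_sup.mp hm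
  obtain ⟨a, haa, b, hbb, rfl⟩ := Submodule.mem_sup.mp hab
  obtain ⟨s, rfl⟩ := Submodule.mem_span_singleton.mp haa
  obtain ⟨t, rfl⟩ := Submodule.mem_span_singleton.mp hc'
  rw [← heq, inner_add_left, inner_add_left, inner_smul_left, inner_smul_left, ha, hc, hb b hbb]
  ring

lemma exists_zeta (U : H ≃ₗᵢ[ℂ] H) (x : ℤ) (η : H)
    (horth : ∀ y : ℤ, y ≠ x → ∀ i : Fin 2, (inner ℂ (U (e y i)) η : ℂ) = 0) :
    ∃ ζ ∈ Hx x, ‖ζ‖ = ‖η‖ ∧ U ζ = η := by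
  refine ⟨U.symm η, ?_, by simp, by simp⟩
  apply mem_Hx_of_coords
  intro y hy i
  have h2 := U.inner_map_map (e y i) (U.symm η)
  rw [U.apply_symm_apply] at h2
  rw [← h2]
  exact horth y hy i

/-- If `rank(P_x U P_{x+1}) = 0` then some unit vector
`ζ₁ ∈ H_x` satisfies `U ζ₁ = η₁ˣ`; if `rank(P_x U P_{x−1}) = 0` then some unit
vector `ζ₂ ∈ H_x` satisfies `U ζ₂ = η₂ˣ`. -/
theorem rank_zero_case (U : H ≃ₗᵢ[ℂ] H) (hU : SSQW U) (η₁ η₂ : ℤ → H)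
    (hη : ∀ x : ℤ, ONBx x (η₁ x) (η₂ x))
    (hrange : ∀ x : ℤ, ∀ ψ ∈ Hx x,
      U ψ ∈ Submodule.span ℂ {η₁ (x - 1)} ⊔ Hx x ⊔ Submodule.span ℂ {η₂ (x + 1)})
    (x : ℤ) :
    (LinearMap.rank (((P x).comp ((clm U).comp (P (x + 1)))).toLinearMap) = 0 →
      ∃ ζ₁ ∈ Hx x, ‖ζ₁‖ = 1 ∧ U ζ₁ = η₁ x) ∧
    (LinearMap.rank (((P x).comp ((clm U).comp (P (x - 1)))).toLinearMap) = 0 →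
      ∃ ζ₂ ∈ Hx x, ‖ζ₂‖ = 1 ∧ U ζ₂ = η₂ x) := by
  obtain ⟨h1x, h2x, h1n, h2n, h12⟩ := hη x
  constructor
  · intro hr
    have horth : ∀ y : ℤ, y ≠ x → ∀ i : Fin 2, (inner ℂ (U (e y i)) (η₁ x) : ℂ) = 0 := by
      intro y hy i
      by_cases hy1 : y = x + 1
      · subst hy1
        obtain ⟨a, b, heq⟩ := Submodule.mem_span_pair.mp h1x
        have hz : ∀ j : Fin 2, (inner ℂ (U (e (x + 1) i)) (e x j) : ℂ) = 0 := fun j => by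
          rw [← inner_conj_symm, rank_zero_inner hr i j, map_zero]
        rw [← heq, inner_add_right, inner_smul_right, inner_smul_right, hz 0, hz 1]
        ring
      · refine decomp_inner hrange y i (η₁ x) ?_ ?_ ?_
        · exact Hx_orth (by omega) (hη (y - 1)).1 h1x
        · exact fun v hv => Hx_orth hy hv h1x
        · by_cases hy2 : y + 1 = x
          · rw [hy2, ← inner_conj_symm, h12, map_zero]
          · exact Hx_orth hy2 (hη (y + 1)).2.1 h1x
    obtain ⟨ζ, hζ, hn, hUζ⟩ := exists_zeta U x (η₁ x) horth
    exact ⟨ζ, hζ, by rw [hn, h1n], hUζ⟩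
  · intro hr
    have horth : ∀ y : ℤ, y ≠ x → ∀ i : Fin 2, (inner ℂ (U (e y i)) (η₂ x) : ℂ) = 0 := by
      intro y hy i
      by_cases hy1 : y = x - 1
      · subst hy1
        obtain ⟨a, b, heq⟩ := Submodule.mem_span_pair.mp h2x
        have hz : ∀ j : Fin 2, (inner ℂ (U (e (x - 1) i)) (e x j) : ℂ) = 0 := fun j => by
          rw [← inner_conj_symm, rank_zero_inner hr i j, map_zero]
        rw [← heq, inner_add_right, inner_smul_right, inner_smul_right, hz 0, hz 1]
        ring
      · refine decomp_inner hrange y i (η₂ x) ?_ ?_ ?_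
        · by_cases hy2 : y - 1 = x
          · rw [hy2]; exact h12
          · exact Hx_orth hy2 (hη (y - 1)).1 h2x
        · exact fun v hv => Hx_orth hy hv h2x
        · exact Hx_orth (by omega) (hη (y + 1)).2.1 h2x
    obtain ⟨ζ, hζ, hn, hUζ⟩ := exists_zeta U x (η₂ x) horth
    exact ⟨ζ, hζ, by rw [hn, h2n], hUζ⟩
end
end

section
/- Let U be a unitary on H satisfying the SSQW conditions and Assumption A, and let {η₁ˣ, η₂ˣ}_{x∈ℤ} be orthonormal bases of the H_x with U H_x ⊆ ℂη₁^{x−1} ⊕ H_x ⊕ ℂη₂^{x+1} for all x ∈ ℤ. Then for each x ∈ ℤ there exists an orthonormal basis {ζ₁ˣ, ζ₂ˣ} of H_x such that U ζ₁ˣ ∈ ℂη₁ˣ + ℂη₂^{x+1} and U ζ₂ˣ ∈ ℂη₁^{x−1} + ℂη₂ˣ. -/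
noncomputable section

/-- Assumption A: `U P_y` is never of the form `|v⟩⟨ζ₁| + |w⟩⟨ζ₂|` with
`{ζ₁, ζ₂}` an orthonormal basis of `H_y` and unit vectors `v, w` with either
`v ∈ H_{y-1}, w ∈ H_y` or `v ∈ H_y, w ∈ H_{y+1}`. -/
def AssumptionA (U : H ≃ₗᵢ[ℂ] H) : Prop :=
  ¬ ∃ (y : ℤ) (ζ₁ ζ₂ v w : H), ONBx y ζ₁ ζ₂ ∧ ‖v‖ = 1 ∧ ‖w‖ = 1 ∧
    ((v ∈ Hx (y - 1) ∧ w ∈ Hx y) ∨ (v ∈ Hx y ∧ w ∈ Hx (y + 1))) ∧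
    (clm U).comp (P y) = ketbra v ζ₁ + ketbra w ζ₂

open scoped ComplexConjugate Matrix

lemma inner_e_left (x : ℤ) (i : Fin 2) (v : H) : (inner ℂ (e x i) v : ℂ) = v (x, i) := by
  rw [e, lp.inner_single_left]; simp [RCLike.inner_apply]

lemma inner_e_right (x : ℤ) (i : Fin 2) (v : H) : (inner ℂ v (e x i) : ℂ) = conj (v (x, i)) := by
  rw [e, lp.inner_single_right]; simp [RCLike.inner_apply]

lemma e_apply (x : ℤ) (i : Fin 2) (k : ℤ × Fin 2) : (e x i) k = if k = (x,i) then 1 else 0 := by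
  rcases eq_or_ne k (x,i) with h|h
  · simp [h, e, lp.single_apply_self]
  · simp [h, e, lp.single_apply_ne _ _ _ h]

lemma coord_comb (s t : ℂ) (u w : H) (k : ℤ × Fin 2) :
    (s • u + t • w : H) k = s * u k + t * w k := by
  simp [lp.coeFn_add, lp.coeFn_smul, Pi.add_apply, Pi.smul_apply]; rfl

lemma Hx_repr {x : ℤ} {v : H} (hv : v ∈ Hx x) :
    v = v (x,0) • e x 0 + v (x,1) • e x 1 := by
  rw [Hx] at hv
  obtain ⟨s, t, hst⟩ := Submodule.mem_span_pair.1 hv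
  have h0 : v (x,0) = s := by
    rw [← hst, coord_comb, e_apply, e_apply]; norm_num
  have h1 : v (x,1) = t := by
    rw [← hst, coord_comb, e_apply, e_apply]; norm_num
  rw [h0, h1, hst]

lemma Hx_coord0 {x : ℤ} {v : H} (hv : v ∈ Hx x) (y : ℤ) (j : Fin 2) (h : y ≠ x) :
    v (y,j) = 0 := by
  rw [Hx_repr hv, coord_comb, e_apply, e_apply]
  have h1 : ((y,j) : ℤ × Fin 2) ≠ (x,0) := by simp [Prod.ext_iff, h]
  have h2 : ((y,j) : ℤ × Fin 2) ≠ (x,1) := by simp [Prod.ext_iff, h]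
  simp [h1, h2]

lemma mem_Hx_comb (x : ℤ) (s t : ℂ) : s • e x 0 + t • e x 1 ∈ Hx x := by
  rw [Hx]
  exact Submodule.add_mem _
    (Submodule.smul_mem _ _ (Submodule.subset_span (by simp)))
    (Submodule.smul_mem _ _ (Submodule.subset_span (by simp)))

lemma mem_Hx_of_coords_s4 {x : ℤ} {v : H} (h : ∀ y j, y ≠ x → v (y,j) = 0) : v ∈ Hx x := by
  have : v = v (x,0) • e x 0 + v (x,1) • e x 1 := by
    apply lp.ext; funext k
    rcases k with ⟨y, j⟩
    rw [coord_comb, e_apply, e_apply]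
    rcases eq_or_ne y x with rfl | hy
    · fin_cases j <;> norm_num
    · have h1 : ((y,j) : ℤ × Fin 2) ≠ (x,0) := by simp [Prod.ext_iff, hy]
      have h2 : ((y,j) : ℤ × Fin 2) ≠ (x,1) := by simp [Prod.ext_iff, hy]
      simp [h1, h2, h y j hy]
  rw [this]; exact mem_Hx_comb x _ _

lemma inner_left_of_mem {x : ℤ} {u : H} (hu : u ∈ Hx x) (v : H) :
    (inner ℂ u v : ℂ) = conj (u (x,0)) * v (x,0) + conj (u (x,1)) * v (x,1) := by
  conv_lhs => rw [Hx_repr hu]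
  rw [inner_add_left, inner_smul_left, inner_smul_left, inner_e_left, inner_e_left]

lemma ortho_blocks {y z : ℤ} {u v : H} (hu : u ∈ Hx y) (hv : v ∈ Hx z) (h : y ≠ z) :
    (inner ℂ u v : ℂ) = 0 := by
  rw [inner_left_of_mem hu, Hx_coord0 hv y 0 h, Hx_coord0 hv y 1 h]
  ring
lemma supp2_inner {y z : ℤ} (hyz : y ≠ z) {u : H} (v : H)
    (hu : ∀ w j, w ≠ y → w ≠ z → u (w,j) = 0) :
    (inner ℂ u v : ℂ) = conj (u (y,0)) * v (y,0) + conj (u (y,1)) * v (y,1)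
      + conj (u (z,0)) * v (z,0) + conj (u (z,1)) * v (z,1) := by
  have hrep : u = (u (y,0) • e y 0 + u (y,1) • e y 1) + (u (z,0) • e z 0 + u (z,1) • e z 1) := by
    apply lp.ext; funext k
    rcases k with ⟨w, j⟩
    rw [lp.coeFn_add, Pi.add_apply, coord_comb, coord_comb]
    simp only [e_apply]
    rcases eq_or_ne w y with rfl | hwy
    · have : ((w,j) : ℤ × Fin 2) ≠ (z,0) := by simp [Prod.ext_iff, hyz]
      have : ((w,j) : ℤ × Fin 2) ≠ (z,1) := by simp [Prod.ext_iff, hyz]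
      fin_cases j <;> simp [Prod.ext_iff, hyz] <;> norm_num
    · rcases eq_or_ne w z with rfl | hwz
      · fin_cases j <;> simp [Prod.ext_iff, Ne.symm hwy, hwy] <;> norm_num
      · have h1 : ((w,j) : ℤ × Fin 2) ≠ (y,0) := by simp [Prod.ext_iff, hwy]
        have h2 : ((w,j) : ℤ × Fin 2) ≠ (y,1) := by simp [Prod.ext_iff, hwy]
        have h3 : ((w,j) : ℤ × Fin 2) ≠ (z,0) := by simp [Prod.ext_iff, hwz]
        have h4 : ((w,j) : ℤ × Fin 2) ≠ (z,1) := by simp [Prod.ext_iff, hwz]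
        simp [h1, h2, h3, h4, hu w j hwy hwz]
  conv_lhs => rw [hrep]
  rw [inner_add_left, inner_add_left, inner_add_left]
  simp only [inner_smul_left, inner_e_left]
  ring
open scoped ComplexConjugate Matrix
lemma unitary2 (γ0 γ1 δ0 δ1 : ℂ)
    (h1 : conj γ0 * γ0 + conj γ1 * γ1 = 1)
    (h2 : conj δ0 * δ0 + conj δ1 * δ1 = 1)
    (h3 : conj γ0 * δ0 + conj γ1 * δ1 = 0) :
    (conj γ0 * γ0 + conj δ0 * δ0 = 1) ∧ (conj γ0 * γ1 + conj δ0 * δ1 = 0)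
      ∧ (conj γ1 * γ0 + conj δ1 * δ0 = 0) ∧ (conj γ1 * γ1 + conj δ1 * δ1 = 1) := by
  have h3' : γ0 * conj δ0 + γ1 * conj δ1 = 0 := by
    have := congrArg conj h3; simpa using this
  set M : Matrix (Fin 2) (Fin 2) ℂ := !![γ0, γ1; δ0, δ1] with hM
  have key : M * Mᴴ = 1 := by
    ext i j
    fin_cases i <;> fin_cases j <;>
      simp [hM, Matrix.mul_apply, Fin.sum_univ_two, Matrix.conjTranspose_apply,
        Matrix.one_apply]
    · linear_combination h1
    · linear_combination h3'
    · linear_combination h3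
    · linear_combination h2
  have key2 : Mᴴ * M = 1 := mul_eq_one_comm.mp key
  have E : ∀ i j, (Mᴴ * M) i j = (1 : Matrix (Fin 2) (Fin 2) ℂ) i j := fun i j => by
    rw [key2]
  have E00 := E 0 0
  have E01 := E 0 1
  have E10 := E 1 0
  have E11 := E 1 1
  simp [hM, Matrix.mul_apply, Fin.sum_univ_two, Matrix.conjTranspose_apply,
    Matrix.one_apply] at E00 E01 E10 E11
  exact ⟨by linear_combination E00, by linear_combination E01,
    by linear_combination E10, by linear_combination E11⟩

lemma onb_expand {y : ℤ} {u v : H} (h : ONBx y u v) {w : H} (hw : w ∈ Hx y) :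
    w = (inner ℂ u w : ℂ) • u + (inner ℂ v w : ℂ) • v := by
  obtain ⟨hu, hv, hnu, hnv, huv⟩ := h
  have h1 : conj (u (y,0)) * u (y,0) + conj (u (y,1)) * u (y,1) = 1 := by
    have := inner_left_of_mem hu u
    rw [inner_self_eq_norm_sq_to_K, hnu] at this
    simpa using this.symm
  have h2 : conj (v (y,0)) * v (y,0) + conj (v (y,1)) * v (y,1) = 1 := by
    have := inner_left_of_mem hv v
    rw [inner_self_eq_norm_sq_to_K, hnv] at this
    simpa using this.symm
  have h3 : conj (u (y,0)) * v (y,0) + conj (u (y,1)) * v (y,1) = 0 := by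
    rw [← inner_left_of_mem hu v]; exact huv
  obtain ⟨e00, e01, e10, e11⟩ := unitary2 _ _ _ _ h1 h2 h3
  have hiu := inner_left_of_mem hu w
  have hiv := inner_left_of_mem hv w
  rw [hiu, hiv]
  have hurep := Hx_repr hu
  have hvrep := Hx_repr hv
  have hwrep := Hx_repr hw
  nth_rewrite 1 [hwrep]
  nth_rewrite 3 [hurep]
  nth_rewrite 3 [hvrep]
  match_scalars
  · linear_combination (-(w (y,0) * e00) - w (y,1) * e10)
  · linear_combination (-(w (y,0) * e01) - w (y,1) * e11)

def blk (x : ℤ) (v : H) : H := v (x,0) • e x 0 + v (x,1) • e x 1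

lemma blk_mem (x : ℤ) (v : H) : blk x v ∈ Hx x := mem_Hx_comb x _ _

lemma blk_coord (x : ℤ) (v : H) (j : Fin 2) : (blk x v) (x,j) = v (x,j) := by
  rw [blk, coord_comb, e_apply, e_apply]
  fin_cases j <;> norm_num <;> rfl

lemma blk_ne_zero {x : ℤ} {v : H} {j : Fin 2} (h : v (x,j) ≠ 0) : blk x v ≠ 0 := by
  intro h0
  apply h
  rw [← blk_coord x v j, h0]
  simp [lp.coeFn_zero]

lemma inner_blk_right (x : ℤ) (u v : H) :
    (inner ℂ u (blk x v) : ℂ) = v (x,0) * conj (u (x,0)) + v (x,1) * conj (u (x,1)) := by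
  rw [blk, inner_add_right, inner_smul_right, inner_smul_right, inner_e_right, inner_e_right]

lemma inner_blk_blk (x : ℤ) (u v : H) :
    (inner ℂ (blk x u) (blk x v) : ℂ) = conj (u (x,0)) * v (x,0) + conj (u (x,1)) * v (x,1) := by
  rw [inner_left_of_mem (blk_mem x u) (blk x v), blk_coord, blk_coord, blk_coord, blk_coord]

lemma P_apply (y : ℤ) (ψ : H) :
    P y ψ = (ψ (y,0)) • e y 0 + (ψ (y,1)) • e y 1 := by
  simp only [P, ketbra, ContinuousLinearMap.add_apply, ContinuousLinearMap.smulRight_apply,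
    innerSL_apply_apply, inner_e_left]

lemma inner_P {y : ℤ} {v : H} (hv : v ∈ Hx y) (ψ : H) :
    (inner ℂ v (P y ψ) : ℂ) = inner ℂ v ψ := by
  rw [P_apply, inner_add_right, inner_smul_right, inner_smul_right, inner_e_right,
    inner_e_right, inner_left_of_mem hv ψ]
  ring

lemma ketbra_factor (U : H ≃ₗᵢ[ℂ] H) {y : ℤ} {c d : H} (h : ONBx y c d) :
    (clm U).comp (P y) = ketbra (U c) c + ketbra (U d) d := by
  refine ContinuousLinearMap.ext fun ψ => ?_
  have hPmem : P y ψ ∈ Hx y := by rw [P_apply]; exact mem_Hx_comb y _ _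
  have hexp := onb_expand h hPmem
  calc (clm U).comp (P y) ψ = U (P y ψ) := rfl
    _ = U ((inner ℂ c (P y ψ) : ℂ) • c + (inner ℂ d (P y ψ) : ℂ) • d) := by rw [← hexp]
    _ = (inner ℂ c (P y ψ) : ℂ) • U c + (inner ℂ d (P y ψ) : ℂ) • U d := by
        rw [map_add, map_smul, map_smul]
    _ = (inner ℂ c ψ : ℂ) • U c + (inner ℂ d ψ : ℂ) • U d := by
        rw [inner_P h.1, inner_P h.2.1]
    _ = (ketbra (U c) c + ketbra (U d) d) ψ := by
        simp [ketbra, ContinuousLinearMap.add_apply, ContinuousLinearMap.smulRight_apply,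
          innerSL_apply_apply]

lemma e_mem_Hx (y : ℤ) (j : Fin 2) : e y j ∈ Hx y := by
  rw [Hx]
  apply Submodule.subset_span
  fin_cases j <;> simp


/-- Under the SSQW conditions and Assumption A, for each `x`
there is an orthonormal basis `{ζ₁ˣ, ζ₂ˣ}` of `H_x` with
`U ζ₁ˣ ∈ ℂη₁ˣ + ℂη₂^{x+1}` and `U ζ₂ˣ ∈ ℂη₁^{x−1} + ℂη₂ˣ`. -/
theorem exists_zeta_basis (U : H ≃ₗᵢ[ℂ] H) (hU : SSQW U) (hA : AssumptionA U)
    (η₁ η₂ : ℤ → H) (hη : ∀ x : ℤ, ONBx x (η₁ x) (η₂ x))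
    (hrange : ∀ x : ℤ, ∀ ψ ∈ Hx x,
      U ψ ∈ Submodule.span ℂ {η₁ (x - 1)} ⊔ Hx x ⊔ Submodule.span ℂ {η₂ (x + 1)})
    (x : ℤ) :
    ∃ ζ₁ ζ₂ : H, ONBx x ζ₁ ζ₂ ∧
      U ζ₁ ∈ Submodule.span ℂ {η₁ x} ⊔ Submodule.span ℂ {η₂ (x + 1)} ∧
      U ζ₂ ∈ Submodule.span ℂ {η₁ (x - 1)} ⊔ Submodule.span ℂ {η₂ x} := by
  classical
  -- support lemmas for U.symm of the η's
  have hsupp1 : ∀ z y : ℤ, ∀ j : Fin 2, y ≠ z → y ≠ z + 1 → (U.symm (η₁ z) : H) (y,j) = 0 := by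
    intro z y j h1 h2
    have hkey : ((U.symm (η₁ z) : H) (y,j) : ℂ) = inner ℂ (U (e y j)) (η₁ z) := by
      rw [← inner_e_left y j (U.symm (η₁ z)), ← LinearIsometryEquiv.inner_map_map U,
        U.apply_symm_apply]
    rw [hkey]
    obtain ⟨p, hp, q, hq, hpq⟩ := Submodule.mem_sup.1 (hrange y (e y j) (e_mem_Hx y j))
    obtain ⟨r, hr, hvec, hhvec, hrh⟩ := Submodule.mem_sup.1 hp
    obtain ⟨k1, rfl⟩ := Submodule.mem_span_singleton.1 hr
    obtain ⟨k2, rfl⟩ := Submodule.mem_span_singleton.1 hq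
    rw [← hpq, ← hrh, inner_add_left, inner_add_left, inner_smul_left, inner_smul_left]
    have o1 : (inner ℂ (η₁ (y-1)) (η₁ z) : ℂ) = 0 :=
      ortho_blocks (hη _).1 (hη _).1 (by omega)
    have o2 : (inner ℂ hvec (η₁ z) : ℂ) = 0 := ortho_blocks hhvec (hη _).1 h1
    have o3 : (inner ℂ (η₂ (y+1)) (η₁ z) : ℂ) = 0 := by
      rcases eq_or_ne (y+1) z with h|hne
      · rw [h, ← inner_conj_symm, (hη z).2.2.2.2]; simp
      · exact ortho_blocks (hη _).2.1 (hη _).1 hne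
    rw [o1, o2, o3]; ring
  have hsupp2 : ∀ z y : ℤ, ∀ j : Fin 2, y ≠ z - 1 → y ≠ z → (U.symm (η₂ z) : H) (y,j) = 0 := by
    intro z y j h1 h2
    have hkey : ((U.symm (η₂ z) : H) (y,j) : ℂ) = inner ℂ (U (e y j)) (η₂ z) := by
      rw [← inner_e_left y j (U.symm (η₂ z)), ← LinearIsometryEquiv.inner_map_map U,
        U.apply_symm_apply]
    rw [hkey]
    obtain ⟨p, hp, q, hq, hpq⟩ := Submodule.mem_sup.1 (hrange y (e y j) (e_mem_Hx y j))
    obtain ⟨r, hr, hvec, hhvec, hrh⟩ := Submodule.mem_sup.1 hp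
    obtain ⟨k1, rfl⟩ := Submodule.mem_span_singleton.1 hr
    obtain ⟨k2, rfl⟩ := Submodule.mem_span_singleton.1 hq
    rw [← hpq, ← hrh, inner_add_left, inner_add_left, inner_smul_left, inner_smul_left]
    have o1 : (inner ℂ (η₁ (y-1)) (η₂ z) : ℂ) = 0 := by
      rcases eq_or_ne (y-1) z with h|hne
      · rw [h]; exact (hη z).2.2.2.2
      · exact ortho_blocks (hη _).1 (hη _).2.1 hne
    have o2 : (inner ℂ hvec (η₂ z) : ℂ) = 0 := ortho_blocks hhvec (hη _).2.1 h2
    have o3 : (inner ℂ (η₂ (y+1)) (η₂ z) : ℂ) = 0 :=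
      ortho_blocks (hη _).2.1 (hη _).2.1 (by omega)
    rw [o1, o2, o3]; ring
  set a : H := U.symm (η₁ (x-1)) with ha_def
  set b : H := U.symm (η₂ x) with hb_def
  set c : H := U.symm (η₁ x) with hc_def
  set d : H := U.symm (η₂ (x+1)) with hd_def
  have ha_supp : ∀ y : ℤ, ∀ j : Fin 2, y ≠ x - 1 → y ≠ x → a (y,j) = 0 := by
    intro y j h1 h2; exact hsupp1 (x-1) y j h1 (by omega)
  have hb_supp : ∀ y : ℤ, ∀ j : Fin 2, y ≠ x - 1 → y ≠ x → b (y,j) = 0 := by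
    intro y j h1 h2; exact hsupp2 x y j (by omega) h2
  have hc_supp : ∀ y : ℤ, ∀ j : Fin 2, y ≠ x → y ≠ x + 1 → c (y,j) = 0 := by
    intro y j h1 h2; exact hsupp1 x y j h1 h2
  have hd_supp : ∀ y : ℤ, ∀ j : Fin 2, y ≠ x → y ≠ x + 1 → d (y,j) = 0 := by
    intro y j h1 h2; exact hsupp2 (x+1) y j (by omega) h2
  -- the four orthogonality relations in the block x
  have hRgen : ∀ u v : H, (∀ y : ℤ, ∀ j : Fin 2, y ≠ x - 1 → y ≠ x → u (y,j) = 0) →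
      (∀ y : ℤ, ∀ j : Fin 2, y ≠ x → y ≠ x + 1 → v (y,j) = 0) →
      (inner ℂ u v : ℂ) = 0 →
      conj (u (x,0)) * v (x,0) + conj (u (x,1)) * v (x,1) = 0 := by
    intro u v hu hv huv
    have h2 := supp2_inner (show (x - 1 : ℤ) ≠ x by omega) v hu
    rw [huv, hv (x-1) 0 (by omega) (by omega), hv (x-1) 1 (by omega) (by omega)] at h2
    linear_combination -h2
  have hiac : (inner ℂ a c : ℂ) = 0 := by
    rw [ha_def, hc_def, ← LinearIsometryEquiv.inner_map_map U, U.apply_symm_apply,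
      U.apply_symm_apply]
    exact ortho_blocks (hη _).1 (hη _).1 (by omega)
  have hiad : (inner ℂ a d : ℂ) = 0 := by
    rw [ha_def, hd_def, ← LinearIsometryEquiv.inner_map_map U, U.apply_symm_apply,
      U.apply_symm_apply]
    exact ortho_blocks (hη _).1 (hη _).2.1 (by omega)
  have hibc : (inner ℂ b c : ℂ) = 0 := by
    rw [hb_def, hc_def, ← LinearIsometryEquiv.inner_map_map U, U.apply_symm_apply,
      U.apply_symm_apply, ← inner_conj_symm, (hη x).2.2.2.2]
    simp
  have hibd : (inner ℂ b d : ℂ) = 0 := by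
    rw [hb_def, hd_def, ← LinearIsometryEquiv.inner_map_map U, U.apply_symm_apply,
      U.apply_symm_apply]
    exact ortho_blocks (hη _).2.1 (hη _).2.1 (by omega)
  have Rac := hRgen a c ha_supp hc_supp hiac
  have Rad := hRgen a d ha_supp hd_supp hiad
  have Rbc := hRgen b c hb_supp hc_supp hibc
  have Rbd := hRgen b d hb_supp hd_supp hibd
  -- degenerate case 1 : c and d vanish on block x
  by_cases hcd : c (x,0) = 0 ∧ c (x,1) = 0 ∧ d (x,0) = 0 ∧ d (x,1) = 0
  · exfalso
    apply hA
    have hcmem : c ∈ Hx (x+1) := by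
      apply mem_Hx_of_coords_s4
      intro y j hy
      rcases eq_or_ne y x with rfl|hyx
      · fin_cases j
        · exact hcd.1
        · exact hcd.2.1
      · exact hc_supp y j hyx hy
    have hdmem : d ∈ Hx (x+1) := by
      apply mem_Hx_of_coords_s4
      intro y j hy
      rcases eq_or_ne y x with rfl|hyx
      · fin_cases j
        · exact hcd.2.2.1
        · exact hcd.2.2.2
      · exact hd_supp y j hyx hy
    have honb : ONBx (x+1) c d := by
      refine ⟨hcmem, hdmem, ?_, ?_, ?_⟩
      · rw [hc_def, LinearIsometryEquiv.norm_map]; exact (hη x).2.2.1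
      · rw [hd_def, LinearIsometryEquiv.norm_map]; exact (hη (x+1)).2.2.2.1
      · rw [hc_def, hd_def, ← LinearIsometryEquiv.inner_map_map U, U.apply_symm_apply,
          U.apply_symm_apply]
        exact ortho_blocks (hη _).1 (hη _).2.1 (by omega)
    refine ⟨x+1, c, d, η₁ x, η₂ (x+1), honb, (hη x).2.2.1, (hη (x+1)).2.2.2.1,
      Or.inl ⟨?_, (hη (x+1)).2.1⟩, ?_⟩
    · have hxx : (x : ℤ) + 1 - 1 = x := by ring
      rw [hxx]; exact (hη x).1
    · have hfac := ketbra_factor U honb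
      rw [hc_def, hd_def, U.apply_symm_apply, U.apply_symm_apply] at hfac
      exact hfac
  -- degenerate case 2 : a and b vanish on block x
  by_cases hab : a (x,0) = 0 ∧ a (x,1) = 0 ∧ b (x,0) = 0 ∧ b (x,1) = 0
  · exfalso
    apply hA
    have hamem : a ∈ Hx (x-1) := by
      apply mem_Hx_of_coords_s4
      intro y j hy
      rcases eq_or_ne y x with rfl|hyx
      · fin_cases j
        · exact hab.1
        · exact hab.2.1
      · exact ha_supp y j hy hyx
    have hbmem : b ∈ Hx (x-1) := by
      apply mem_Hx_of_coords_s4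
      intro y j hy
      rcases eq_or_ne y x with rfl|hyx
      · fin_cases j
        · exact hab.2.2.1
        · exact hab.2.2.2
      · exact hb_supp y j hy hyx
    have honb : ONBx (x-1) a b := by
      refine ⟨hamem, hbmem, ?_, ?_, ?_⟩
      · rw [ha_def, LinearIsometryEquiv.norm_map]; exact (hη (x-1)).2.2.1
      · rw [hb_def, LinearIsometryEquiv.norm_map]; exact (hη x).2.2.2.1
      · rw [ha_def, hb_def, ← LinearIsometryEquiv.inner_map_map U, U.apply_symm_apply,
          U.apply_symm_apply]
        exact ortho_blocks (hη _).1 (hη _).2.1 (by omega)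
    refine ⟨x-1, a, b, η₁ (x-1), η₂ x, honb, (hη (x-1)).2.2.1, (hη x).2.2.2.1,
      Or.inr ⟨(hη (x-1)).1, ?_⟩, ?_⟩
    · have hxx : (x : ℤ) - 1 + 1 = x := by ring
      rw [hxx]; exact (hη x).2.1
    · have hfac := ketbra_factor U honb
      rw [ha_def, hb_def, U.apply_symm_apply, U.apply_symm_apply] at hfac
      exact hfac
  -- main case
  have memUP : ∀ w : H, w ∈ Hx x → (inner ℂ a w : ℂ) = 0 → (inner ℂ b w : ℂ) = 0 →
      U w ∈ Submodule.span ℂ {η₁ x} ⊔ Submodule.span ℂ {η₂ (x+1)} := by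
    intro w hw haw hbw
    obtain ⟨p, hp, q, hq, hpq⟩ := Submodule.mem_sup.1 (hrange x w hw)
    obtain ⟨r, hr, hvec, hhvec, hrh⟩ := Submodule.mem_sup.1 hp
    obtain ⟨k1, rfl⟩ := Submodule.mem_span_singleton.1 hr
    obtain ⟨k2, rfl⟩ := Submodule.mem_span_singleton.1 hq
    have hUw : U w = k1 • η₁ (x-1) + hvec + k2 • η₂ (x+1) := by rw [← hpq, ← hrh]
    have ha' : (inner ℂ (η₁ (x-1)) (U w) : ℂ) = 0 := by
      conv_lhs => rw [← U.apply_symm_apply (η₁ (x-1))]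
      rw [LinearIsometryEquiv.inner_map_map]
      exact haw
    have hb' : (inner ℂ (η₂ x) (U w) : ℂ) = 0 := by
      conv_lhs => rw [← U.apply_symm_apply (η₂ x)]
      rw [LinearIsometryEquiv.inner_map_map]
      exact hbw
    rw [hUw, inner_add_right, inner_add_right, inner_smul_right, inner_smul_right] at ha' hb'
    have n1 : (inner ℂ (η₁ (x-1)) (η₁ (x-1)) : ℂ) = 1 := by
      rw [inner_self_eq_norm_sq_to_K, (hη (x-1)).2.2.1]; norm_num
    have z1 : (inner ℂ (η₁ (x-1)) hvec : ℂ) = 0 := ortho_blocks (hη _).1 hhvec (by omega)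
    have z2 : (inner ℂ (η₁ (x-1)) (η₂ (x+1)) : ℂ) = 0 :=
      ortho_blocks (hη _).1 (hη _).2.1 (by omega)
    rw [n1, z1, z2] at ha'
    have hk1 : k1 = 0 := by simpa using ha'
    have z3 : (inner ℂ (η₂ x) (η₁ (x-1)) : ℂ) = 0 := ortho_blocks (hη _).2.1 (hη _).1 (by omega)
    have z4 : (inner ℂ (η₂ x) (η₂ (x+1)) : ℂ) = 0 := ortho_blocks (hη _).2.1 (hη _).2.1 (by omega)
    rw [z3, z4] at hb'
    have hbz : (inner ℂ (η₂ x) hvec : ℂ) = 0 := by simpa using hb'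
    have hrepr := onb_expand (hη x) hhvec
    rw [hbz, zero_smul, add_zero] at hrepr
    refine Submodule.mem_sup.2 ⟨(inner ℂ (η₁ x) hvec : ℂ) • η₁ x,
      Submodule.smul_mem _ _ (Submodule.subset_span rfl), k2 • η₂ (x+1),
      Submodule.smul_mem _ _ (Submodule.subset_span rfl), ?_⟩
    rw [hUw, hk1, zero_smul, zero_add]
    conv_rhs => rw [hrepr]
  have memUP2 : ∀ w : H, w ∈ Hx x → (inner ℂ c w : ℂ) = 0 → (inner ℂ d w : ℂ) = 0 →
      U w ∈ Submodule.span ℂ {η₁ (x-1)} ⊔ Submodule.span ℂ {η₂ x} := by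
    intro w hw hcw hdw
    obtain ⟨p, hp, q, hq, hpq⟩ := Submodule.mem_sup.1 (hrange x w hw)
    obtain ⟨r, hr, hvec, hhvec, hrh⟩ := Submodule.mem_sup.1 hp
    obtain ⟨k1, rfl⟩ := Submodule.mem_span_singleton.1 hr
    obtain ⟨k2, rfl⟩ := Submodule.mem_span_singleton.1 hq
    have hUw : U w = k1 • η₁ (x-1) + hvec + k2 • η₂ (x+1) := by rw [← hpq, ← hrh]
    have hc' : (inner ℂ (η₁ x) (U w) : ℂ) = 0 := by
      conv_lhs => rw [← U.apply_symm_apply (η₁ x)]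
      rw [LinearIsometryEquiv.inner_map_map]
      exact hcw
    have hd' : (inner ℂ (η₂ (x+1)) (U w) : ℂ) = 0 := by
      conv_lhs => rw [← U.apply_symm_apply (η₂ (x+1))]
      rw [LinearIsometryEquiv.inner_map_map]
      exact hdw
    rw [hUw, inner_add_right, inner_add_right, inner_smul_right, inner_smul_right] at hc' hd'
    have n1 : (inner ℂ (η₂ (x+1)) (η₂ (x+1)) : ℂ) = 1 := by
      rw [inner_self_eq_norm_sq_to_K, (hη (x+1)).2.2.2.1]; norm_num
    have z1 : (inner ℂ (η₂ (x+1)) hvec : ℂ) = 0 := ortho_blocks (hη _).2.1 hhvec (by omega)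
    have z2 : (inner ℂ (η₂ (x+1)) (η₁ (x-1)) : ℂ) = 0 :=
      ortho_blocks (hη _).2.1 (hη _).1 (by omega)
    rw [n1, z1, z2] at hd'
    have hk2 : k2 = 0 := by simpa using hd'
    have z3 : (inner ℂ (η₁ x) (η₁ (x-1)) : ℂ) = 0 := ortho_blocks (hη _).1 (hη _).1 (by omega)
    have z4 : (inner ℂ (η₁ x) (η₂ (x+1)) : ℂ) = 0 := ortho_blocks (hη _).1 (hη _).2.1 (by omega)
    rw [z3, z4] at hc'
    have hcz : (inner ℂ (η₁ x) hvec : ℂ) = 0 := by simpa using hc'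
    have hrepr := onb_expand (hη x) hhvec
    rw [hcz, zero_smul, zero_add] at hrepr
    refine Submodule.mem_sup.2 ⟨k1 • η₁ (x-1),
      Submodule.smul_mem _ _ (Submodule.subset_span rfl), (inner ℂ (η₂ x) hvec : ℂ) • η₂ x,
      Submodule.smul_mem _ _ (Submodule.subset_span rfl), ?_⟩
    rw [hUw, hk2, zero_smul, add_zero]
    conv_rhs => rw [hrepr]
  -- selecting the nonvanishing block parts
  have build : ∀ g f : H,
      (conj (g (x,0)) * a (x,0) + conj (g (x,1)) * a (x,1) = 0) →
      (conj (g (x,0)) * b (x,0) + conj (g (x,1)) * b (x,1) = 0) →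
      (conj (f (x,0)) * c (x,0) + conj (f (x,1)) * c (x,1) = 0) →
      (conj (f (x,0)) * d (x,0) + conj (f (x,1)) * d (x,1) = 0) →
      (conj (g (x,0)) * f (x,0) + conj (g (x,1)) * f (x,1) = 0) →
      ¬(g (x,0) = 0 ∧ g (x,1) = 0) → ¬(f (x,0) = 0 ∧ f (x,1) = 0) →
      ∃ ζ₁ ζ₂ : H, ONBx x ζ₁ ζ₂ ∧
        U ζ₁ ∈ Submodule.span ℂ {η₁ x} ⊔ Submodule.span ℂ {η₂ (x + 1)} ∧
        U ζ₂ ∈ Submodule.span ℂ {η₁ (x - 1)} ⊔ Submodule.span ℂ {η₂ x} := by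
    intro g f hga hgb hfc hfd hgf hg hf
    set w₁ : H := blk x g with hw₁
    set w₂ : H := blk x f with hw₂
    have hw₁ne : w₁ ≠ 0 := by
      rcases not_and_or.1 hg with h|h
      · exact blk_ne_zero h
      · exact blk_ne_zero h
    have hw₂ne : w₂ ≠ 0 := by
      rcases not_and_or.1 hf with h|h
      · exact blk_ne_zero h
      · exact blk_ne_zero h
    have haw₁ : (inner ℂ a w₁ : ℂ) = 0 := by
      rw [hw₁, inner_blk_right]
      have := congrArg conj hga
      simp only [map_add, map_mul, RingHomCompTriple.comp_apply, RingHom.id_apply,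
        Complex.conj_conj, map_zero] at this
      linear_combination this
    have hbw₁ : (inner ℂ b w₁ : ℂ) = 0 := by
      rw [hw₁, inner_blk_right]
      have := congrArg conj hgb
      simp only [map_add, map_mul, Complex.conj_conj, map_zero] at this
      linear_combination this
    have hcw₂ : (inner ℂ c w₂ : ℂ) = 0 := by
      rw [hw₂, inner_blk_right]
      have := congrArg conj hfc
      simp only [map_add, map_mul, Complex.conj_conj, map_zero] at this
      linear_combination this
    have hdw₂ : (inner ℂ d w₂ : ℂ) = 0 := by
      rw [hw₂, inner_blk_right]
      have := congrArg conj hfd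
      simp only [map_add, map_mul, Complex.conj_conj, map_zero] at this
      linear_combination this
    have h12 : (inner ℂ w₁ w₂ : ℂ) = 0 := by
      rw [hw₁, hw₂, inner_blk_blk]
      exact hgf
    have hn₁ : ‖w₁‖ ≠ 0 := norm_ne_zero_iff.2 hw₁ne
    have hn₂ : ‖w₂‖ ≠ 0 := norm_ne_zero_iff.2 hw₂ne
    refine ⟨((‖w₁‖ : ℂ))⁻¹ • w₁, ((‖w₂‖ : ℂ))⁻¹ • w₂,
      ⟨Submodule.smul_mem _ _ (hw₁ ▸ blk_mem x g),
       Submodule.smul_mem _ _ (hw₂ ▸ blk_mem x f), ?_, ?_, ?_⟩, ?_, ?_⟩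
    · rw [norm_smul, norm_inv, Complex.norm_real, Real.norm_eq_abs,
        abs_of_nonneg (norm_nonneg _), inv_mul_cancel₀ hn₁]
    · rw [norm_smul, norm_inv, Complex.norm_real, Real.norm_eq_abs,
        abs_of_nonneg (norm_nonneg _), inv_mul_cancel₀ hn₂]
    · rw [inner_smul_left, inner_smul_right, h12]
      ring
    · rw [map_smul]
      exact Submodule.smul_mem _ _ (memUP w₁ (hw₁ ▸ blk_mem x g) haw₁ hbw₁)
    · rw [map_smul]
      exact Submodule.smul_mem _ _ (memUP2 w₂ (hw₂ ▸ blk_mem x f) hcw₂ hdw₂)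
  -- conjugated relations
  have Rca : conj (c (x,0)) * a (x,0) + conj (c (x,1)) * a (x,1) = 0 := by
    have := congrArg conj Rac
    simp only [map_add, map_mul, Complex.conj_conj, map_zero] at this
    linear_combination this
  have Rda : conj (d (x,0)) * a (x,0) + conj (d (x,1)) * a (x,1) = 0 := by
    have := congrArg conj Rad
    simp only [map_add, map_mul, Complex.conj_conj, map_zero] at this
    linear_combination this
  have Rcb : conj (c (x,0)) * b (x,0) + conj (c (x,1)) * b (x,1) = 0 := by
    have := congrArg conj Rbc
    simp only [map_add, map_mul, Complex.conj_conj, map_zero] at this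
    linear_combination this
  have Rdb : conj (d (x,0)) * b (x,0) + conj (d (x,1)) * b (x,1) = 0 := by
    have := congrArg conj Rbd
    simp only [map_add, map_mul, Complex.conj_conj, map_zero] at this
    linear_combination this
  by_cases hc0 : c (x,0) = 0 ∧ c (x,1) = 0
  · -- use d for ζ₁
    have hd0 : ¬(d (x,0) = 0 ∧ d (x,1) = 0) := by
      intro h; exact hcd ⟨hc0.1, hc0.2, h.1, h.2⟩
    by_cases ha0 : a (x,0) = 0 ∧ a (x,1) = 0
    · have hb0 : ¬(b (x,0) = 0 ∧ b (x,1) = 0) := by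
        intro h; exact hab ⟨ha0.1, ha0.2, h.1, h.2⟩
      exact build d b Rda Rdb Rbc Rbd Rdb hd0 hb0
    · exact build d a Rda Rdb Rac Rad Rda hd0 ha0
  · by_cases ha0 : a (x,0) = 0 ∧ a (x,1) = 0
    · have hb0 : ¬(b (x,0) = 0 ∧ b (x,1) = 0) := by
        intro h; exact hab ⟨ha0.1, ha0.2, h.1, h.2⟩
      exact build c b Rca Rcb Rbc Rbd Rcb hc0 hb0
    · exact build c a Rca Rcb Rac Rad Rca hc0 ha0
end
end
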